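/- arXiv:1103.2992 — 3 statements merged into one kernel-verified Lean document; each statement's English description precedes it below -/
import Mathlib

section
/- Let F be the free group of rank r ≥ 2 with basis A = {a_1, ..., a_r}, let 1 ≤ l ≤ r-1, and let F̂ denote the subgroup of F generated by {a_1, ..., a_l} (which is free of rank l with basis {a_1, ..., a_l}). If S = {x_1, ..., x_k} is a subset of F̂ that can be extended to a free basis of F, then S can be extended to a free basis of F̂. -/
/-- The subgroup of the free group on `Fin r` generated by the first `l` generators. -/
def hatSubgroup (r l : ℕ) : Subgroup (FreeGroup (Fin r)) :=
  Subgroup.closure (FreeGroup.of '' {i : Fin r | (i : ℕ) < l})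

/-- A subset `B` of a group `G` is a free basis if the canonical homomorphism from the
free group on `B` to `G` is an isomorphism. -/
def IsFreeBasis {G : Type*} [Group G] (B : Set G) : Prop :=
  Function.Bijective (FreeGroup.lift (Subtype.val : B → G))


noncomputable section
open Function Set

universe u

/-- From a basis, the unique lift property in `∃!` form. -/
lemma FreeGroupBasis.unique_lift' {ι G : Type u} [Group G] (β : FreeGroupBasis ι G)
    {X : Type u} [Group X] (f : ι → X) : ∃! F : G →* X, ∀ a, F (β a) = f a := by
  refine ⟨β.lift f, fun a => ?_, fun F hF => ?_⟩
  · show (β.lift : (ι → X) ≃ (G →* X)) f (β a) = f a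
    have := congrFun ((β.lift : (ι → X) ≃ (G →* X)).symm_apply_apply f) a
    simpa [FreeGroupBasis.lift] using this
  · apply β.ext_hom
    intro i
    rw [hF i]
    show f i = (β.lift : (ι → X) ≃ (G →* X)) f (β i)
    have := congrFun ((β.lift : (ι → X) ≃ (G →* X)).symm_apply_apply f) i
    simpa [FreeGroupBasis.lift] using this

lemma FreeGroupBasis.lift_coe_bijective {ι G : Type u} [Group G] (β : FreeGroupBasis ι G) :
    Function.Bijective (FreeGroup.lift (⇑β : ι → G)) := by
  have h : (FreeGroup.lift (⇑β : ι → G)) = (β.repr.symm : FreeGroup ι ≃* G).toMonoidHom := by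
    apply FreeGroup.ext_hom
    intro i
    simp only [FreeGroup.lift_apply_of]
    rfl
  rw [h]
  exact β.repr.symm.bijective

/-- range of a bijective lift is a free basis in the `IsFreeBasis` sense. -/
lemma bijective_lift_val_range {S G : Type u} [Group G] (f : S → G)
    (hb : Function.Bijective (FreeGroup.lift f)) :
    Function.Bijective (FreeGroup.lift (Subtype.val : Set.range f → G)) := by
  have finj : Function.Injective f := by
    intro a b h
    have : FreeGroup.lift f (FreeGroup.of a) = FreeGroup.lift f (FreeGroup.of b) := by simp [h]
    exact FreeGroup.of_injective (hb.injective this)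
  set e : S ≃ Set.range f := Equiv.ofInjective f finj with he
  have key : FreeGroup.lift (Subtype.val : Set.range f → G) =
      (FreeGroup.lift f).comp (FreeGroup.freeGroupCongr e.symm).toMonoidHom := by
    apply FreeGroup.ext_hom
    intro y
    simp only [FreeGroup.lift_apply_of, MonoidHom.comp_apply, MulEquiv.coe_toMonoidHom,
      FreeGroup.freeGroupCongr_apply, FreeGroup.map.of]
    have : f (e.symm y) = (e (e.symm y) : G) := rfl
    rw [this, e.apply_symm_apply]
  rw [key]
  exact hb.comp (FreeGroup.freeGroupCongr e.symm).bijective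

open scoped Classical
open CategoryTheory CategoryTheory.ActionCategory CategoryTheory.SingleObj Quiver FreeGroup
open MulAction SemidirectProduct

set_option linter.unusedVariables false in
/-- Variant of `actionGroupoidIsFree` where we control the generating quiver via a chosen
free group basis `β`. -/
def myActionGroupoidIsFree {G A : Type u} [Group G] [MulAction G A] {ι : Type u}
    (β : FreeGroupBasis ι G) : IsFreeGroupoid (ActionCategory G A) where
  quiverGenerators :=
    ⟨fun a b => { e : ι // β e • a.back = b.back }⟩
  of := fun (e : { e // _ }) => ⟨β e, e.property⟩
  unique_lift := by
    intro X _ f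
    let f' : ι → (A → X) ⋊[mulAutArrow] G := fun e =>
      ⟨fun b => @f ⟨(), _⟩ ⟨(), b⟩ ⟨e, smul_inv_smul _ b⟩, β e⟩
    rcases β.unique_lift' f' with ⟨F', hF', uF'⟩
    refine ⟨uncurry F' ?_, ?_, ?_⟩
    · suffices SemidirectProduct.rightHom.comp F' = MonoidHom.id _ by
        exact DFunLike.ext_iff.mp this
      apply β.ext_hom
      intro x
      rw [MonoidHom.comp_apply, hF']
      rfl
    · rintro ⟨⟨⟩, a : A⟩ ⟨⟨⟩, b⟩ ⟨e, h : β e • a = b⟩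
      change (F' (β _)).left _ = _
      rw [hF']
      cases inv_smul_eq_iff.mpr h.symm
      rfl
    · intro E hE
      have : curry E = F' := by
        apply uF'
        intro e
        ext
        · convert! hE _ _ _
          rfl
        · rfl
      apply Functor.hext
      · intro
        apply Unit.ext
      · refine ActionCategory.cases ?_
        intros
        subst this
        rfl

open IsFreeGroupoid IsFreeGroupoid.SpanningTree in
lemma myEndUniqueLift {G : Type u} [Groupoid.{u} G] [IsFreeGroupoid G]
    (T : WideSubquiver (Symmetrify <| Generators G)) [Arborescence T]
    {X : Type u} [Group X]
    (f : ((wideSubquiverEquivSetTotal <| wideSubquiverSymmetrify T)ᶜ : Set _) → X) :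
    ∃! F : End (show G from Quiver.root T) →* X,
      ∀ e, F (loopOfHom T (IsFreeGroupoid.of e.val.hom)) = f e := by
  let f' : Labelling (Generators G) X := fun a b e =>
    if h : e ∈ wideSubquiverSymmetrify T a b then 1 else f ⟨⟨a, b, e⟩, h⟩
  rcases unique_lift f' with ⟨F', hF', uF'⟩
  refine ⟨F'.mapEnd _, ?_, ?_⟩
  · suffices ∀ {x y} (q : x ⟶ y), F'.map (loopOfHom T q) = (F'.map q : X) by
      rintro ⟨⟨a, b, e⟩, h⟩
      erw [Functor.mapEnd_apply, this, hF']
      exact dif_neg h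
    intros x y q
    suffices ∀ {a} (p : Path (Quiver.root T) a), F'.map (homOfPath T p) = 1 by
      simp only [this (a := x), this (a := y), treeHom, comp_as_mul, inv_as_inv, loopOfHom, inv_one, mul_one,
        one_mul, Functor.map_inv, Functor.map_comp]
    intro a p
    induction' p with b c p e ih
    · rw [homOfPath]; exact F'.map_id _
    change F'.map (homOfPath T p ≫ _) = 1
    refine (F'.map_comp _ _).trans ?_
    change F'.map _ * F'.map (homOfPath T p) = 1
    rw [ih, mul_one]
    rcases e with ⟨e | e, eT⟩
    · refine (hF' _ _ e).trans ?_
      exact dif_pos (Or.inl eT)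
    · refine (@Functor.map_inv _ _ _ _ F' _ _ (IsFreeGroupoid.of (G := G) e) (IsIso.of_groupoid _)).trans ?_
      rw [inv_as_inv, inv_eq_one]
      refine (hF' _ _ e).trans ?_
      exact dif_pos (Or.inr eT)
  · intro E hE
    ext x
    have hroot : treeHom T (show G from Quiver.root T) = 𝟙 _ := treeHom_root T
    have funeq : functorOfMonoidHom T E = F' := by
      apply uF'
      intro a b e
      change E (loopOfHom T _) = dite _ _ _
      split_ifs with h
      · rw [loopOfHom_eq_id T e h]
        exact E.map_one
      · exact hE ⟨⟨a, b, e⟩, h⟩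
    have key : E (loopOfHom T x) = F'.map x := by rw [← funeq]; rfl
    have hx : loopOfHom T x = x := by
      show (treeHom T _ ≫ x ≫ CategoryTheory.inv (treeHom T _)) = x
      rw [hroot]
      simp only [CategoryTheory.IsIso.inv_id, CategoryTheory.Category.id_comp]
      exact (CategoryTheory.Category.id_comp _).trans ((congrArg (x ≫ ·) CategoryTheory.IsIso.inv_id).trans (CategoryTheory.Category.comp_id x))
    rw [hx] at key
    exact key

lemma lift_bijective_of_uniqueLift {G : Type u} [Group G] {X : Type u} (j : X → G)
    (h : ∀ {K : Type u} [Group K] (f : X → K), ∃! F : G →* K, ∀ a, F (j a) = f a) :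
    Function.Bijective (FreeGroup.lift j) := by
  obtain ⟨F, hF, uF⟩ := h (FreeGroup.of : X → FreeGroup X)
  constructor
  · have hcomp : F.comp (FreeGroup.lift j) = MonoidHom.id _ := by
      apply FreeGroup.ext_hom
      intro a
      simp [hF a]
    intro u v huv
    have := congrArg F huv
    calc u = F.comp (FreeGroup.lift j) u := by rw [hcomp]; rfl
      _ = F.comp (FreeGroup.lift j) v := this
      _ = v := by rw [hcomp]; rfl
  · obtain ⟨F', hF', uF'⟩ := h j
    have e1 : (FreeGroup.lift j).comp F = F' := by
      apply uF'
      intro a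
      simp [hF a]
    have e2 : MonoidHom.id G = F' := by
      apply uF'
      intro a
      rfl
    intro g
    refine ⟨F g, ?_⟩
    have : (FreeGroup.lift j).comp F = MonoidHom.id G := by rw [e1, ← e2]
    calc FreeGroup.lift j (F g) = ((FreeGroup.lift j).comp F) g := rfl
      _ = g := by rw [this]; rfl

open IsFreeGroupoid IsFreeGroupoid.SpanningTree in
lemma main_basis {G : Type u} [Group G] {ι : Type u} (β : FreeGroupBasis ι G) (H : Subgroup G) :
    ∃ (S : Type u) (f : S → H), Function.Bijective (FreeGroup.lift f) ∧
      ∀ (i : ι) (hg : β i ∈ H), (⟨β i, hg⟩ : H) ∈ Set.range f := by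
  letI instFG : IsFreeGroupoid (ActionCategory G (G ⧸ H)) := myActionGroupoidIsFree β
  letI : IsFreeGroupoid (CategoryTheory.Functor.Elements (actionAsFunctor G (G ⧸ H))) := instFG
  let r₀ : ActionCategory G (G ⧸ H) := objEquiv G (G ⧸ H) ↑(1 : G)
  letI : RootedConnected (show Symmetrify (Generators (ActionCategory G (G ⧸ H))) from r₀) :=
    @generators_connected _ _ (inferInstanceAs (IsConnected (ActionCategory G (G ⧸ H)))) _ r₀
  let T : WideSubquiver (Symmetrify <| Generators (ActionCategory G (G ⧸ H))) :=
    geodesicSubtree (show Symmetrify (Generators (ActionCategory G (G ⧸ H))) from r₀)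
  letI : Arborescence T := geodesicArborescence _
  let S := ((wideSubquiverEquivSetTotal <| wideSubquiverSymmetrify T)ᶜ : Set _)
  let j : S → End (show ActionCategory G (G ⧸ H) from Quiver.root T) :=
    fun e => loopOfHom T (IsFreeGroupoid.of e.val.hom)
  let φ := endMulEquivSubgroup H
  let f : S → H := fun e => φ (j e)
  letI : Group (End (show ActionCategory G (G ⧸ H) from Quiver.root T)) := End.group _
  have h1 : Function.Bijective (FreeGroup.lift j) :=
    lift_bijective_of_uniqueLift j (fun {K} _ g => myEndUniqueLift T g)
  have h2 : FreeGroup.lift f = φ.toMonoidHom.comp (FreeGroup.lift j) := by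
    apply FreeGroup.ext_hom
    intro e
    simp only [FreeGroup.lift_apply_of, MonoidHom.comp_apply, MulEquiv.coe_toMonoidHom]
    exact congrArg φ (FreeGroup.lift_apply_of (f := j)).symm
  refine ⟨S, f, ?_, ?_⟩
  · rw [h2]
    exact φ.bijective.comp h1
  · intro i hgi
    have hsmul : β i • (ActionCategory.back r₀) = ActionCategory.back r₀ := by
      show β i • ((1 : G) : G ⧸ H) = ((1 : G) : G ⧸ H)
      have h' : β i • ((1 : G) : G ⧸ H) = ((β i * 1 : G) : G ⧸ H) := rfl
      rw [h', mul_one]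
      rw [QuotientGroup.eq]
      simpa using hgi
    let e0 : @Quiver.Hom (Generators (ActionCategory G (G ⧸ H))) _ r₀ r₀ := ⟨i, hsmul⟩
    have hS : (⟨r₀, r₀, e0⟩ : Total (Generators (ActionCategory G (G ⧸ H)))) ∈ S := by
      intro hmem
      have hmem' : e0 ∈ wideSubquiverSymmetrify T r₀ r₀ := hmem
      rcases hmem' with h | h
      · have e' : @Quiver.Hom (WideSubquiver.toType _ T) _ (Quiver.root T) (Quiver.root T) :=
          ⟨Sum.inl e0, h⟩
        exact Path.nil_ne_cons Path.nil e' (Subsingleton.elim _ _)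
      · have e' : @Quiver.Hom (WideSubquiver.toType _ T) _ (Quiver.root T) (Quiver.root T) :=
          ⟨Sum.inr e0, h⟩
        exact Path.nil_ne_cons Path.nil e' (Subsingleton.elim _ _)
    refine ⟨⟨⟨r₀, r₀, e0⟩, hS⟩, ?_⟩
    have hroot : treeHom T (show ActionCategory G (G ⧸ H) from r₀) = 𝟙 _ :=
      treeHom_root T
    have hloop : j ⟨⟨r₀, r₀, e0⟩, hS⟩ = IsFreeGroupoid.of e0 := by
      show loopOfHom T (IsFreeGroupoid.of e0) = _
      rw [loopOfHom]
      have key : ∀ {C : Type u} [Groupoid C] {a : C} (t g : a ⟶ a), t = 𝟙 a →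
          t ≫ g ≫ CategoryTheory.inv t = g := by
        intro C _ a t g ht
        subst ht
        simp
      exact key _ _ (treeHom_root T)
    show φ (j ⟨⟨r₀, r₀, e0⟩, hS⟩) = ⟨β i, hgi⟩
    rw [hloop]
    exact Subtype.ext rfl

theorem stmt0 (r l k : ℕ) (hr : 2 ≤ r) (hl : 1 ≤ l) (hlr : l ≤ r - 1)
    (x : Fin k → FreeGroup (Fin r)) (hx : ∀ i, x i ∈ hatSubgroup r l)
    (hprim : ∃ B : Set (FreeGroup (Fin r)), IsFreeBasis B ∧ Set.range x ⊆ B) :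
    ∃ B : Set (hatSubgroup r l),
      IsFreeBasis B ∧ (Set.range fun i => (⟨x i, hx i⟩ : hatSubgroup r l)) ⊆ B := by
  obtain ⟨B₀, hB₀, hxB₀⟩ := hprim
  let β : FreeGroupBasis B₀ (FreeGroup (Fin r)) :=
    FreeGroupBasis.ofRepr
      ((MulEquiv.ofBijective (FreeGroup.lift (Subtype.val : B₀ → FreeGroup (Fin r))) hB₀).symm)
  have hβ : ∀ a : B₀, β a = a.val := fun a => FreeGroup.lift_apply_of
  obtain ⟨S, f, hbij, hmem⟩ := main_basis β (hatSubgroup r l)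
  refine ⟨Set.range f, bijective_lift_val_range f hbij, ?_⟩
  rintro _ ⟨i, rfl⟩
  have hmemB : x i ∈ B₀ := hxB₀ ⟨i, rfl⟩
  have hg' : β ⟨x i, hmemB⟩ ∈ hatSubgroup r l := by rw [hβ]; exact hx i
  have h2 := hmem ⟨x i, hmemB⟩ hg'
  have : (⟨x i, hx i⟩ : hatSubgroup r l) = ⟨β ⟨x i, hmemB⟩, hg'⟩ := Subtype.ext (hβ ⟨x i, hmemB⟩).symm
  show (⟨x i, hx i⟩ : hatSubgroup r l) ∈ Set.range f
  rw [this]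
  exact h2
end
end

section
/- Let n > 0, let F be the free group of rank r ≥ 2 with basis {a_1, ..., a_r}, let 1 ≤ l ≤ r-1, and let F̂ be the subgroup generated by {a_1, ..., a_l}. Let F'F^n denote the (normal) subgroup of F generated by the commutator subgroup F' together with all n-th powers, and similarly F̂'F̂^n in F̂, so that F/F'F^n ≅ (ℤ/nℤ)^r and F̂/F̂'F̂^n ≅ (ℤ/nℤ)^l. If S = {x_1, ..., x_k} ⊆ F̂ is such that the image of S in F/F'F^n extends to a basis of the free ℤ/nℤ-module F/F'F^n, then the image of S in F̂/F̂'F̂^n extends to a basis of the free ℤ/nℤ-module F̂/F̂'F̂^n. -/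
open scoped commutatorElement

/-- `G'G^n`: the normal subgroup of `G` generated by all commutators together with all
`n`-th powers. -/
def expSub (n : ℕ) (G : Type*) [Group G] : Subgroup G :=
  Subgroup.normalClosure ({y | ∃ a b : G, y = ⁅a, b⁆} ∪ {y | ∃ g : G, y = g ^ n})

instance expSub_normal (n : ℕ) (G : Type*) [Group G] : (expSub n G).Normal :=
  Subgroup.normalClosure_normal

/-- The quotient `G/G'G^n`, the free abelian group of exponent `n` when `G` is free. -/
abbrev ExpQuot (n : ℕ) (G : Type*) [Group G] := G ⧸ expSub n G

instance ExpQuot.commGroup (n : ℕ) (G : Type*) [Group G] : CommGroup (ExpQuot n G) where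
  mul_comm := by
    intro a b
    induction a using QuotientGroup.induction_on with
    | H x =>
    induction b using QuotientGroup.induction_on with
    | H y =>
    rw [← QuotientGroup.mk_mul, ← QuotientGroup.mk_mul, QuotientGroup.eq]
    have : (x * y)⁻¹ * (y * x) = ⁅y⁻¹, x⁻¹⁆ := by
      group
    rw [this]
    exact Subgroup.subset_normalClosure (Or.inl ⟨_, _, rfl⟩)

instance ExpQuot.zmodModule (n : ℕ) (G : Type*) [Group G] :
    Module (ZMod n) (Additive (ExpQuot n G)) :=
  AddCommGroup.zmodModule (by
    intro a
    induction a using QuotientGroup.induction_on with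
    | H x =>
    have h1 : (QuotientGroup.mk (x ^ n) : ExpQuot n G) = 1 := by
      rw [← QuotientGroup.mk_one, QuotientGroup.eq]
      exact Subgroup.subset_normalClosure (Or.inr ⟨x⁻¹, by group⟩)
    show Additive.ofMul ((QuotientGroup.mk x : ExpQuot n G) ^ n) = 0
    rw [← QuotientGroup.mk_pow, h1]
    rfl)

/-- The image of `g` in `G/G'G^n`, viewed additively (a `ℤ/nℤ`-module element). -/
def expImage (n : ℕ) {G : Type*} [Group G] (g : G) : Additive (ExpQuot n G) :=
  Additive.ofMul (QuotientGroup.mk g : ExpQuot n G)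

open Module

/-- stable-range-style combination lemma over ℕ. -/
lemma natCombo : ∀ (K : ℕ) (n : ℕ), n ≠ 0 → ∀ (d : Fin (K + 1) → ℕ),
    (∀ p : ℕ, p.Prime → p ∣ n → ∃ j, ¬ p ∣ d j) →
    ∃ t : Fin (K + 1) → ℕ, t 0 = 1 ∧ Nat.Coprime (∑ j, t j * d j) n := by
  intro K
  induction K with
  | zero =>
    intro n hn d h
    refine ⟨fun _ => 1, rfl, ?_⟩
    have hs : (∑ j : Fin 1, (fun (_ : Fin 1) => 1) j * d j) = d 0 := by simp
    rw [hs]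
    by_contra hc
    obtain ⟨p, hp, hpd, hpn⟩ := Nat.Prime.not_coprime_iff_dvd.mp hc
    obtain ⟨j, hj⟩ := h p hp hpn
    have : j = 0 := Fin.ext (by omega)
    exact hj (this ▸ hpd)
  | succ K IH =>
    intro n hn d h
    set t₁ : ℕ := ∏ p ∈ n.primeFactors.filter (fun p => ¬ p ∣ d 0), p with ht₁
    have ht₁dvd : ∀ p : ℕ, p.Prime → p ∣ n → ¬ p ∣ d 0 → p ∣ t₁ := by
      intro p hp hpn hpd
      exact Finset.dvd_prod_of_mem _ (Finset.mem_filter.mpr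
        ⟨Nat.mem_primeFactors.mpr ⟨hp, hpn, hn⟩, hpd⟩)
    have ht₁ndvd : ∀ p : ℕ, p.Prime → p ∣ d 0 → ¬ p ∣ t₁ := by
      intro p hp hpd hdvd
      obtain ⟨q, hq, hpq⟩ := hp.prime.exists_mem_finset_dvd hdvd
      have hq' := Finset.mem_filter.mp hq
      have hqp : q.Prime := (Nat.mem_primeFactors.mp hq'.1).1
      have : p = q := (Nat.prime_dvd_prime_iff_eq hp hqp).mp hpq
      exact hq'.2 (this ▸ hpd)
    set d' : Fin (K + 1) → ℕ := Fin.cons (d 0 + t₁ * d 1) (fun j => d j.succ.succ) with hd'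
    have h' : ∀ p : ℕ, p.Prime → p ∣ n → ∃ j, ¬ p ∣ d' j := by
      intro p hp hpn
      by_contra hcon
      push_neg at hcon
      have h0' : p ∣ d 0 + t₁ * d 1 := by simpa [hd'] using hcon 0
      have hsucc : ∀ j : Fin K, p ∣ d j.succ.succ := by
        intro j
        simpa [hd'] using hcon j.succ
      obtain ⟨j0, hj0⟩ := h p hp hpn
      by_cases hp0 : p ∣ d 0
      · have hpt : ¬ p ∣ t₁ := ht₁ndvd p hp hp0
        have h1 : p ∣ t₁ * d 1 := (Nat.dvd_add_right hp0).mp h0'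
        have hd1 : p ∣ d 1 := (hp.dvd_mul.mp h1).resolve_left hpt
        have hall : ∀ j : Fin (K + 2), p ∣ d j := by
          intro j
          exact Fin.cases hp0 (fun j1 => Fin.cases hd1 (fun j2 => hsucc j2) j1) j
        exact hj0 (hall j0)
      · have hpt : p ∣ t₁ := ht₁dvd p hp hpn hp0
        have : p ∣ d 0 := by
          rw [add_comm] at h0'
          exact (Nat.dvd_add_right (hpt.mul_right (d 1))).mp h0'
        exact hp0 this
    obtain ⟨t', ht'0, ht'co⟩ := IH n hn d' h'
    refine ⟨Fin.cons 1 (Fin.cons t₁ (fun j => t' j.succ)), rfl, ?_⟩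
    have hsum : (∑ j : Fin (K + 2), (Fin.cons 1 (Fin.cons t₁ (fun j => t' j.succ)) : Fin (K+2) → ℕ) j * d j)
        = ∑ j : Fin (K + 1), t' j * d' j := by
      rw [Fin.sum_univ_succ, Fin.sum_univ_succ, Fin.sum_univ_succ]
      simp only [Fin.cons_zero, Fin.cons_succ, hd', ht'0, Fin.succ_zero_eq_one]
      rw [show (Fin.cons 1 (Fin.cons t₁ fun j => t' j.succ) : Fin (K+2) → ℕ) 1 = t₁ by
        rw [← Fin.succ_zero_eq_one, Fin.cons_succ, Fin.cons_zero]]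
      ring
    rw [hsum]
    exact ht'co

/-- Transvection-type linear automorphism. -/
def tv {R M₀ : Type*} [CommRing R] [AddCommGroup M₀] [Module R M₀]
    (φ : M₀ →ₗ[R] R) (w : M₀) (hw : φ w = 0) : M₀ ≃ₗ[R] M₀ :=
  LinearEquiv.ofLinear
    (LinearMap.id + (LinearMap.toSpanSingleton R M₀ w).comp φ)
    (LinearMap.id - (LinearMap.toSpanSingleton R M₀ w).comp φ)
    (by
      ext x
      simp [LinearMap.toSpanSingleton_apply, map_sub, map_smul, hw, smul_smul, sub_add_cancel])
    (by
      ext x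
      simp [LinearMap.toSpanSingleton_apply, map_add, map_smul, hw, smul_smul, add_sub_cancel])

lemma tv_apply {R M₀ : Type*} [CommRing R] [AddCommGroup M₀] [Module R M₀]
    (φ : M₀ →ₗ[R] R) (w : M₀) (hw : φ w = 0) (x : M₀) :
    tv φ w hw x = x + φ x • w := rfl

lemma tv_symm_apply {R M₀ : Type*} [CommRing R] [AddCommGroup M₀] [Module R M₀]
    (φ : M₀ →ₗ[R] R) (w : M₀) (hw : φ w = 0) (x : M₀) :
    (tv φ w hw).symm x = x - φ x • w := rfl

lemma basis_map_repr {R M₀ ι : Type*} [CommRing R] [AddCommGroup M₀] [Module R M₀]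
    (b : Basis ι R M₀) (f : M₀ ≃ₗ[R] M₀) (x : M₀) :
    (b.map f).repr x = b.repr (f.symm x) := rfl

theorem extendBasis {n : ℕ} [NeZero n] {M : Type*} [AddCommGroup M] [Module (ZMod n) M]
    {m : ℕ} (b : Basis (Fin m) (ZMod n) M) :
    ∀ (k : ℕ) (hk : k ≤ m) (v : Fin k → M), LinearIndependent (ZMod n) v →
      ∃ c : Basis (Fin m) (ZMod n) M, ∀ i : Fin k, c (Fin.castLE hk i) = v i := by
  intro k
  induction k with
  | zero => exact fun hk v _ => ⟨b, fun i => i.elim0⟩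
  | succ k IH =>
    intro hk v hv
    classical
    have hK : k ≤ m := by omega
    obtain ⟨c, hc⟩ := IH hK (v ∘ Fin.castSucc) (hv.comp _ (Fin.castSucc_injective k))
    simp only [Function.comp_apply] at hc
    set vl := v (Fin.last k) with hvldef
    set a := c.repr vl with ha
    set u := vl - ∑ i : Fin k, a (Fin.castLE hK i) • c (Fin.castLE hK i) with hu
    -- coordinates of u
    have hrepr : ∀ j : Fin m, c.repr u j
        = a j - ∑ i : Fin k, (if Fin.castLE hK i = j then a (Fin.castLE hK i) else 0) := by
      intro j
      rw [hu, map_sub, map_sum]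
      simp only [Finsupp.coe_sub, Pi.sub_apply, Finsupp.coe_finset_sum, Finset.sum_apply,
        map_smul, Finsupp.smul_apply, Basis.repr_self, Finsupp.single_apply, smul_eq_mul,
        mul_ite, mul_one, mul_zero]
      rfl
    have hru0 : ∀ j : Fin m, (j : ℕ) < k → c.repr u j = 0 := by
      intro j hj
      rw [hrepr j, Finset.sum_eq_single (⟨(j : ℕ), hj⟩ : Fin k)]
      · have h1 : Fin.castLE hK (⟨(j : ℕ), hj⟩ : Fin k) = j := Fin.ext rfl
        rw [if_pos h1, h1, sub_self]
      · intro i _ hne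
        rw [if_neg]
        intro hcontra
        exact hne (Fin.ext (by simpa [Fin.ext_iff] using hcontra))
      · intro hmem; exact absurd (Finset.mem_univ _) hmem
    have hruk : ∀ j : Fin m, k ≤ (j : ℕ) → c.repr u j = a j := by
      intro j hj
      rw [hrepr j, Finset.sum_eq_zero, sub_zero]
      intro i _
      rw [if_neg]
      intro hcontra
      have := congrArg Fin.val hcontra
      simp only [Fin.coe_castLE] at this
      omega
    -- annihilator of u is trivial
    have hann : ∀ e : ZMod n, e • u = 0 → e = 0 := by
      intro e he
      have hsum : ∑ i : Fin (k + 1),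
          (Fin.snoc (fun i : Fin k => -(e * a (Fin.castLE hK i))) e : Fin (k+1) → ZMod n) i • v i
            = 0 := by
        rw [Fin.sum_univ_castSucc]
        simp only [Fin.snoc_castSucc, Fin.snoc_last]
        have h2 : ∀ i : Fin k, (-(e * a (Fin.castLE hK i))) • v (Fin.castSucc i)
            = -(e • (a (Fin.castLE hK i) • c (Fin.castLE hK i))) := by
          intro i
          rw [← hc i, smul_smul, neg_smul]
        rw [Finset.sum_congr rfl (fun i _ => h2 i)]
        rw [Finset.sum_neg_distrib, ← Finset.smul_sum]
        have he' : e • vl - e • (∑ i : Fin k, a (Fin.castLE hK i) • c (Fin.castLE hK i)) = 0 := by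
          rw [← smul_sub, ← hu]; exact he
        rw [neg_add_eq_sub]
        rwa [← hvldef]
      have := Fintype.linearIndependent_iff.mp hv _ hsum (Fin.last k)
      simpa using this
    -- tail coordinates
    have hkm : k < m := hk
    set K := m - k - 1 with hKdef
    have hidxlt : ∀ j : Fin (K + 1), k + (j : ℕ) < m := by
      intro j; have := j.isLt; omega
    set idx : Fin (K + 1) → Fin m := fun j => ⟨k + (j : ℕ), hidxlt j⟩ with hidx
    set d : Fin (K + 1) → ℕ := fun j => (c.repr u (idx j)).val with hd
    have hdcast : ∀ j, ((d j : ℕ) : ZMod n) = c.repr u (idx j) := by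
      intro j
      simp [hd, ZMod.natCast_val, ZMod.cast_id]
    have hprime : ∀ p : ℕ, p.Prime → p ∣ n → ∃ j, ¬ p ∣ d j := by
      intro p hp hpn
      by_contra hcon
      push_neg at hcon
      have hne : ((n / p : ℕ) : ZMod n) ≠ 0 := by
        rw [Ne, ZMod.natCast_eq_zero_iff]
        intro hdvd
        have h1 : 0 < n / p := Nat.div_pos (Nat.le_of_dvd (NeZero.pos n) hpn) hp.pos
        have h2 : n / p < n := Nat.div_lt_self (NeZero.pos n) hp.one_lt
        exact absurd (Nat.le_of_dvd h1 hdvd) (by omega)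
      apply hne
      apply hann
      have hz : c.repr (((n / p : ℕ) : ZMod n) • u) = 0 := by
        rw [map_smul]
        ext j
        simp only [Finsupp.smul_apply, smul_eq_mul, Finsupp.coe_zero, Pi.zero_apply]
        by_cases hj : (j : ℕ) < k
        · rw [hru0 j hj, mul_zero]
        · have hj' : j = idx ⟨(j : ℕ) - k, by omega⟩ := by
            rw [hidx]; exact Fin.ext (by simp; omega)
          rw [hj', ← hdcast]
          obtain ⟨s, hs⟩ := hcon ⟨(j : ℕ) - k, by omega⟩
          rw [hs]
          rw [← Nat.cast_mul, show (n / p) * (p * s) = n * s by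
            rw [← mul_assoc, Nat.div_mul_cancel hpn]]
          rw [Nat.cast_mul, ZMod.natCast_self, zero_mul]
      exact c.repr.injective (by rw [hz, map_zero])
    obtain ⟨t, ht0, htco⟩ := natCombo K n (NeZero.ne n) d hprime
    -- first transvection: make coordinate at idx 0 a unit
    set φ : M →ₗ[ZMod n] ZMod n
      := -(∑ j : Fin K, ((t j.succ : ℕ) : ZMod n) • c.coord (idx j.succ)) with hφdef
    have hφ : ∀ x : M, φ x = -(∑ j : Fin K, ((t j.succ : ℕ) : ZMod n) * c.repr x (idx j.succ)) := by
      intro x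
      simp [hφdef, Basis.coord_apply]
    have hidxne : ∀ (j : Fin m), (j : ℕ) ≤ k → ∀ j' : Fin K, j ≠ idx j'.succ := by
      intro j hj j' hcontra
      have := congrArg Fin.val hcontra
      simp only [hidx, Fin.val_succ] at this
      omega
    have hφc : ∀ (j : Fin m), (j : ℕ) ≤ k → φ (c j) = 0 := by
      intro j hj
      rw [hφ, Finset.sum_eq_zero, neg_zero]
      intro j' _
      rw [Basis.repr_self, Finsupp.single_apply, if_neg (hidxne j hj j'), mul_zero]
    have hneidx0 : ∀ i : Fin k, Fin.castLE hK i ≠ idx 0 := by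
      intro i hcontra
      have := congrArg Fin.val hcontra
      simp only [hidx, Fin.coe_castLE] at this
      have := i.isLt
      omega
    set T := tv φ (c (idx 0)) (hφc (idx 0) (by simp [hidx])) with hT
    set c₂ := c.map T with hc₂def
    have hc₂repr : ∀ (x : M) (j : Fin m), c₂.repr x j = c.repr (x - φ x • c (idx 0)) j := by
      intro x j
      rw [hc₂def]
      rw [show (c.map T).repr x = c.repr (T.symm x) from rfl, hT, tv_symm_apply]
    have hc₂lt : ∀ i : Fin k, c₂ (Fin.castLE hK i) = v (Fin.castSucc i) := by
      intro i
      rw [hc₂def, Basis.map_apply, hT, tv_apply, hφc _ (by simp only [Fin.coe_castLE]; omega), zero_smul, add_zero]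
      exact hc i
    have hq : c₂.repr u (idx 0) = ((∑ j : Fin (K + 1), t j * d j : ℕ) : ZMod n) := by
      rw [hc₂repr, map_sub, map_smul]
      simp only [Finsupp.coe_sub, Pi.sub_apply, Finsupp.smul_apply, Basis.repr_self,
        Finsupp.single_apply, if_pos rfl, smul_eq_mul, mul_one]
      rw [hφ u, Fin.sum_univ_succ, ht0, one_mul]
      push_cast
      rw [hdcast]
      have : ∀ j : Fin K, ((t j.succ * d j.succ : ℕ) : ZMod n)
          = ((t j.succ : ℕ) : ZMod n) * c.repr u (idx j.succ) := by
        intro j; rw [Nat.cast_mul, hdcast]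
      rw [Finset.sum_congr rfl (fun j _ => (this j).symm)]
      push_cast
      ring
    -- make it 1 by scaling
    set ω : Fin m → (ZMod n)ˣ := fun j =>
      if j = idx 0 then ZMod.unitOfCoprime _ htco else 1 with hω
    set c₃ := c₂.unitsSMul ω with hc₃def
    have hc₃lt : ∀ i : Fin k, c₃ (Fin.castLE hK i) = v (Fin.castSucc i) := by
      intro i
      have hω1 : ω (Fin.castLE hK i) = 1 := by
        rw [hω]; dsimp only; rw [if_neg (hneidx0 i)]
      rw [hc₃def, Basis.unitsSMul_apply, hω1, one_smul]
      exact hc₂lt i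
    have hc₃u : c₃.repr u (idx 0) = 1 := by
      have hω0 : ω (idx 0) = ZMod.unitOfCoprime _ htco := by
        rw [hω]; dsimp only; rw [if_pos rfl]
      rw [hc₃def, Basis.repr_unitsSMul, hω0, hq]
      rw [show ((∑ j : Fin (K + 1), t j * d j : ℕ) : ZMod n)
        = ((ZMod.unitOfCoprime _ htco : (ZMod n)ˣ) : ZMod n) from (ZMod.coe_unitOfCoprime _ _).symm]
      simp [Units.smul_def]
    -- second transvection: put u at position idx 0
    set φ₂ := c₃.coord (idx 0) with hφ₂def
    have hφ₂w : φ₂ (u - c₃ (idx 0)) = 0 := by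
      rw [hφ₂def, Basis.coord_apply, map_sub]
      simp only [Finsupp.coe_sub, Pi.sub_apply]
      rw [hc₃u, Basis.repr_self, Finsupp.single_apply, if_pos rfl, sub_self]
    set T₂ := tv φ₂ (u - c₃ (idx 0)) hφ₂w with hT₂
    set c₄ := c₃.map T₂ with hc₄def
    have hc₄app : ∀ j : Fin m, c₄ j = c₃ j + (c₃.repr (c₃ j) (idx 0)) • (u - c₃ (idx 0)) := by
      intro j
      rw [hc₄def, Basis.map_apply, hT₂, tv_apply, hφ₂def, Basis.coord_apply]
    have hc₄u : c₄ (idx 0) = u := by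
      rw [hc₄app, Basis.repr_self, Finsupp.single_apply, if_pos rfl, one_smul]
      abel
    have hc₄lt : ∀ i : Fin k, c₄ (Fin.castLE hK i) = v (Fin.castSucc i) := by
      intro i
      rw [hc₄app, Basis.repr_self, Finsupp.single_apply, if_neg (hneidx0 i),
        zero_smul, add_zero]
      exact hc₃lt i
    -- third transvection: replace u by vl
    have hvl2 : vl = u + ∑ i : Fin k, a (Fin.castLE hK i) • c₄ (Fin.castLE hK i) := by
      have : ∀ i : Fin k, c₄ (Fin.castLE hK i) = c (Fin.castLE hK i) := by
        intro i; rw [hc₄lt i, ← hc i]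
      rw [Finset.sum_congr rfl (fun i _ => by rw [this i])]
      rw [hu]; abel
    set φ₃ := c₄.coord (idx 0) with hφ₃def
    have hc₄reprvl : c₄.repr vl (idx 0) = 1 := by
      rw [hvl2, map_add, map_sum]
      simp only [Finsupp.coe_add, Pi.add_apply, Finsupp.coe_finset_sum, Finset.sum_apply]
      rw [← hc₄u, Basis.repr_self, Finsupp.single_apply, if_pos rfl]
      rw [Finset.sum_eq_zero, add_zero]
      intro i _
      rw [map_smul, Finsupp.smul_apply, Basis.repr_self, Finsupp.single_apply,
        if_neg (hneidx0 i), smul_zero]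
    have hφ₃w : φ₃ (vl - u) = 0 := by
      rw [hφ₃def, Basis.coord_apply, map_sub]
      simp only [Finsupp.coe_sub, Pi.sub_apply]
      rw [hc₄reprvl, ← hc₄u, Basis.repr_self, Finsupp.single_apply, if_pos rfl, sub_self]
    set T₃ := tv φ₃ (vl - u) hφ₃w with hT₃
    set c₅ := c₄.map T₃ with hc₅def
    have hc₅app : ∀ j : Fin m, c₅ j = c₄ j + (c₄.repr (c₄ j) (idx 0)) • (vl - u) := by
      intro j
      rw [hc₅def, Basis.map_apply, hT₃, tv_apply, hφ₃def, Basis.coord_apply]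
    refine ⟨c₅, ?_⟩
    intro i
    refine Fin.lastCases ?_ ?_ i
    · have hidx0 : Fin.castLE hk (Fin.last k) = idx 0 := Fin.ext (by simp [hidx])
      rw [hidx0, hc₅app, hc₄u, ← hc₄u, Basis.repr_self, Finsupp.single_apply, if_pos rfl,
        one_smul, hc₄u]
      rw [← hvldef]; abel
    · intro i'
      have hidx1 : Fin.castLE hk (Fin.castSucc i') = Fin.castLE hK i' := Fin.ext (by simp)
      rw [hidx1, hc₅app, Basis.repr_self, Finsupp.single_apply, if_neg (hneidx0 i'),
        zero_smul, add_zero]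
      exact hc₄lt i'

section Funct

variable {n : ℕ}

lemma expImage_mul {G : Type*} [Group G] (g h : G) :
    expImage n (g * h) = expImage n g + expImage n h := rfl

lemma expImage_one {G : Type*} [Group G] : expImage n (1 : G) = 0 := rfl

lemma expImage_inv {G : Type*} [Group G] (g : G) : expImage n g⁻¹ = - expImage n g := rfl

lemma expSub_le_comap {G H : Type*} [Group G] [Group H] (f : G →* H) :
    expSub n G ≤ (expSub n H).comap f := by
  haveI : ((expSub n H).comap f).Normal := Subgroup.Normal.comap (expSub_normal n H) f
  apply Subgroup.normalClosure_le_normal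
  rintro y (⟨a, b, rfl⟩ | ⟨g, rfl⟩)
  · show f ⁅a, b⁆ ∈ expSub n H
    rw [map_commutatorElement]
    exact Subgroup.subset_normalClosure (Or.inl ⟨_, _, rfl⟩)
  · show f (g ^ n) ∈ expSub n H
    rw [map_pow]
    exact Subgroup.subset_normalClosure (Or.inr ⟨_, rfl⟩)

def expQuotHom {G H : Type*} [Group G] [Group H] (f : G →* H) :
    ExpQuot n G →* ExpQuot n H :=
  QuotientGroup.map _ _ f (expSub_le_comap f)

def expQuotLinear {G H : Type*} [Group G] [Group H] (f : G →* H) :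
    Additive (ExpQuot n G) →ₗ[ZMod n] Additive (ExpQuot n H) :=
  (MonoidHom.toAdditive (expQuotHom (n := n) f)).toZModLinearMap n

lemma expQuotLinear_expImage {G H : Type*} [Group G] [Group H] (f : G →* H) (g : G) :
    expQuotLinear (n := n) f (expImage n g) = expImage n (f g) := rfl

lemma expSub_le_ker {G A : Type*} [Group G] [CommGroup A] (f : G →* A)
    (hA : ∀ a : A, a ^ n = 1) : expSub n G ≤ f.ker := by
  apply Subgroup.normalClosure_le_normal
  rintro y (⟨a, b, rfl⟩ | ⟨g, rfl⟩)
  · show f ⁅a, b⁆ = 1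
    rw [map_commutatorElement, commutatorElement_eq_one_iff_mul_comm]
    exact mul_comm _ _
  · show f (g ^ n) = 1
    rw [map_pow]
    exact hA _

end Funct

section Hat

variable (n r l : ℕ)

lemma memHat {i : Fin r} (h : (i : ℕ) < l) : FreeGroup.of i ∈ hatSubgroup r l :=
  Subgroup.subset_closure ⟨i, h, rfl⟩

def hatGen (hlr : l ≤ r) (j : Fin l) : hatSubgroup r l :=
  ⟨FreeGroup.of (Fin.castLE hlr j), memHat r l (by simpa using j.isLt)⟩

def hatRetract : FreeGroup (Fin r) →* hatSubgroup r l :=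
  FreeGroup.lift (fun i => if h : (i : ℕ) < l then ⟨FreeGroup.of i, memHat r l h⟩ else 1)

lemma hatRetract_mem {w : FreeGroup (Fin r)} (hw : w ∈ hatSubgroup r l) :
    hatRetract r l w = ⟨w, hw⟩ := by
  induction hw using Subgroup.closure_induction with
  | mem x hx =>
    obtain ⟨i, hi, rfl⟩ := hx
    apply Subtype.ext
    show ((hatRetract r l) (FreeGroup.of i) : FreeGroup (Fin r)) = FreeGroup.of i
    rw [hatRetract, FreeGroup.lift_apply_of, dif_pos (show ((i : Fin r) : ℕ) < l from hi)]
  | one => rw [map_one]; rfl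
  | mul x y hx hy ihx ihy => rw [map_mul, ihx, ihy]; rfl
  | inv x hx ihx => rw [map_inv, ihx]; rfl

def hatCoords : FreeGroup (Fin r) →* Multiplicative (Fin l → ZMod n) :=
  FreeGroup.lift (fun i =>
    Multiplicative.ofAdd (if h : (i : ℕ) < l then Pi.single (⟨i, h⟩ : Fin l) (1 : ZMod n) else 0))

lemma hat_pow_n_eq_one (v : Multiplicative (Fin l → ZMod n)) : v ^ n = 1 := by
  have h : n • v.toAdd = (0 : Fin l → ZMod n) := by
    funext j
    show n • (v.toAdd j) = 0
    rw [nsmul_eq_mul, ZMod.natCast_self, zero_mul]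
  have : (v ^ n).toAdd = (1 : Multiplicative (Fin l → ZMod n)).toAdd := by
    rw [toAdd_pow, h]; rfl
  exact Multiplicative.toAdd.injective this

def hatQuotCoords : ExpQuot n (hatSubgroup r l) →* Multiplicative (Fin l → ZMod n) :=
  QuotientGroup.lift _ ((hatCoords n r l).comp (hatSubgroup r l).subtype)
    (expSub_le_ker _ (hat_pow_n_eq_one n l))

def hatLambda : Additive (ExpQuot n (hatSubgroup r l)) →ₗ[ZMod n] (Fin l → ZMod n) :=
  (MonoidHom.toAdditiveLeft (hatQuotCoords n r l)).toZModLinearMap n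

lemma hatLambda_gen (hlr : l ≤ r) (j : Fin l) :
    hatLambda n r l (expImage n (hatGen r l hlr j)) = Pi.single j (1 : ZMod n) := by
  show Multiplicative.toAdd
    (hatQuotCoords n r l (QuotientGroup.mk (hatGen r l hlr j))) = Pi.single j (1 : ZMod n)
  rw [hatQuotCoords, QuotientGroup.lift_mk]
  show Multiplicative.toAdd ((hatCoords n r l) (FreeGroup.of (Fin.castLE hlr j))) = _
  rw [hatCoords, FreeGroup.lift_apply_of, dif_pos (by simpa using j.isLt : ((Fin.castLE hlr j : Fin r) : ℕ) < l)]
  rw [toAdd_ofAdd]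
  congr 1

lemma hatGen_li (hlr : l ≤ r) :
    LinearIndependent (ZMod n) (fun j : Fin l => expImage n (hatGen r l hlr j)) := by
  rw [Fintype.linearIndependent_iff]
  intro g hg j
  have h1 := congrArg (hatLambda n r l) hg
  rw [map_sum, map_zero] at h1
  simp_rw [map_smul, hatLambda_gen] at h1
  have h2 := congrFun h1 j
  simpa [Pi.single_apply] using h2

lemma hatGen_span (hlr : l ≤ r) (y : Additive (ExpQuot n (hatSubgroup r l))) :
    y ∈ Submodule.span (ZMod n)
      (Set.range (fun j : Fin l => expImage n (hatGen r l hlr j))) := by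
  have key : ∀ (w : FreeGroup (Fin r)) (hw : w ∈ hatSubgroup r l),
      expImage n (⟨w, hw⟩ : hatSubgroup r l) ∈ Submodule.span (ZMod n)
        (Set.range (fun j : Fin l => expImage n (hatGen r l hlr j))) := by
    intro w hw
    induction hw using Subgroup.closure_induction with
    | mem x hx =>
      obtain ⟨i, hi, rfl⟩ := hx
      have hxeq : (⟨FreeGroup.of i, Subgroup.subset_closure ⟨i, hi, rfl⟩⟩ :
          hatSubgroup r l) = hatGen r l hlr ⟨(i : ℕ), hi⟩ := by
        apply Subtype.ext
        show FreeGroup.of i = FreeGroup.of (Fin.castLE hlr ⟨(i : ℕ), hi⟩)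
        rfl
      rw [hxeq]
      exact Submodule.subset_span ⟨_, rfl⟩
    | one =>
      have : (⟨(1 : FreeGroup (Fin r)), one_mem _⟩ : hatSubgroup r l) = 1 := rfl
      rw [this, expImage_one]
      exact zero_mem _
    | mul x y hx hy ihx ihy =>
      have : (⟨x * y, mul_mem hx hy⟩ : hatSubgroup r l) = ⟨x, hx⟩ * ⟨y, hy⟩ := rfl
      rw [this, expImage_mul]
      exact add_mem ihx ihy
    | inv x hx ihx =>
      have : (⟨x⁻¹, inv_mem hx⟩ : hatSubgroup r l) = (⟨x, hx⟩ : hatSubgroup r l)⁻¹ := rfl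
      rw [this, expImage_inv]
      exact neg_mem ihx
  obtain ⟨z, rfl⟩ : ∃ z : ExpQuot n (hatSubgroup r l), Additive.ofMul z = y := ⟨y.toMul, rfl⟩
  induction z using QuotientGroup.induction_on with
  | H zz => exact key zz.1 zz.2

def hatInc : Additive (ExpQuot n (hatSubgroup r l))
    →ₗ[ZMod n] Additive (ExpQuot n (FreeGroup (Fin r))) :=
  expQuotLinear (hatSubgroup r l).subtype

lemma hatInc_injective : Function.Injective (hatInc n r l) := by
  have hli : Function.LeftInverse (expQuotLinear (n := n) (hatRetract r l)) (hatInc n r l) := by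
    intro y
    obtain ⟨z, rfl⟩ : ∃ z : ExpQuot n (hatSubgroup r l), Additive.ofMul z = y := ⟨y.toMul, rfl⟩
    induction z using QuotientGroup.induction_on with
    | H zz =>
      show expQuotLinear (hatRetract r l) (expQuotLinear ((hatSubgroup r l).subtype)
        (expImage n zz)) = expImage n zz
      rw [expQuotLinear_expImage, expQuotLinear_expImage]
      show expImage n (hatRetract r l (zz : FreeGroup (Fin r))) = expImage n zz
      rw [hatRetract_mem r l zz.2]
  exact hli.injective

end Hat

theorem stmt2 (n : ℕ) (hn : 0 < n) (r l k : ℕ) (hr : 2 ≤ r) (hl : 1 ≤ l) (hlr : l ≤ r - 1)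
    (x : Fin k → FreeGroup (Fin r)) (hx : ∀ i, x i ∈ hatSubgroup r l)
    (hprim : ∃ (ι : Type)
        (b : Module.Basis ι (ZMod n) (Additive (ExpQuot n (FreeGroup (Fin r))))),
      ∀ i, expImage n (x i) ∈ Set.range ⇑b) :
    ∃ (ι : Type) (b : Module.Basis ι (ZMod n) (Additive (ExpQuot n (hatSubgroup r l)))),
      ∀ i, expImage n (⟨x i, hx i⟩ : hatSubgroup r l) ∈ Set.range ⇑b := by
  classical
  haveI : NeZero n := ⟨hn.ne'⟩
  have hlr2 : l ≤ r := by omega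
  obtain ⟨ι, b, hb⟩ := hprim
  set N := Additive (ExpQuot n (hatSubgroup r l)) with hN
  let bN : Basis (Fin l) (ZMod n) N :=
    Basis.mk (hatGen_li n r l hlr2) (fun y _ => hatGen_span n r l hlr2 y)
  let y : Fin k → N := fun i => expImage n (⟨x i, hx i⟩ : hatSubgroup r l)
  have hΨy : ∀ i, hatInc n r l (y i) = expImage n (x i) := fun i =>
    expQuotLinear_expImage _ _
  set s : Set N := Set.range y with hs
  haveI : Fintype s := (Set.finite_range y).fintype
  have hchoice : ∀ a : s, ∃ j : ι, b j = hatInc n r l a.1 := by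
    rintro ⟨a, i, rfl⟩
    obtain ⟨j, hj⟩ := hb i
    exact ⟨j, by rw [hj, hΨy]⟩
  choose g hg using hchoice
  have hginj : Function.Injective g := by
    intro a a' h
    have h2 : hatInc n r l a.1 = hatInc n r l a'.1 := by rw [← hg a, ← hg a', h]
    exact Subtype.ext (hatInc_injective n r l h2)
  have hli1 : LinearIndependent (ZMod n) (fun a : s => hatInc n r l a.1) := by
    have h3 : (fun a : s => hatInc n r l a.1) = b ∘ g := funext fun a => (hg a).symm
    rw [h3]
    exact b.linearIndependent.comp g hginj
  have hli : LinearIndependent (ZMod n) (fun a : s => a.1) :=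
    LinearIndependent.of_comp (hatInc n r l) hli1
  let e := (Fintype.equivFin s).symm
  have hlis : LinearIndependent (ZMod n) (fun i : Fin (Fintype.card s) => ((e i : s) : N)) :=
    hli.comp e e.injective
  have hcard : Fintype.card s ≤ l := by
    by_cases h1 : n = 1
    · subst h1
      haveI : Subsingleton N := Module.subsingleton (ZMod 1) N
      have := Fintype.card_le_one_iff_subsingleton.mpr (inferInstance : Subsingleton s)
      omega
    · haveI : Fact (1 < n) := ⟨by omega⟩
      have h4 := bN.card_le_card_of_linearIndependent hlis
      rw [Fintype.card_fin, Fintype.card_fin] at h4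
      exact h4
  obtain ⟨c, hc⟩ := extendBasis bN (Fintype.card s) hcard _ hlis
  refine ⟨Fin l, c, ?_⟩
  intro i
  have hmem : y i ∈ s := ⟨i, rfl⟩
  refine ⟨Fin.castLE hcard (e.symm ⟨y i, hmem⟩), ?_⟩
  rw [hc (e.symm ⟨y i, hmem⟩)]
  show (((e (e.symm ⟨y i, hmem⟩)) : s) : N) = _
  rw [e.apply_symm_apply]
end

section
/- Let n > 0, r ≥ 2 and 1 ≤ l ≤ r-1. Identify (ℤ/nℤ)^l with the submodule of (ℤ/nℤ)^r consisting of vectors whose last r-l coordinates are zero. Suppose v_1, ..., v_k ∈ (ℤ/nℤ)^l ⊆ (ℤ/nℤ)^r are vectors that can be extended to a ℤ/nℤ-module basis of (ℤ/nℤ)^r. Then v_1, ..., v_k (viewed in (ℤ/nℤ)^l) can be extended to a ℤ/nℤ-module basis of (ℤ/nℤ)^l. -/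
set_option linter.unusedVariables false


lemma sr1 (n : ℕ) [NeZero n] (a b : ZMod n) (h : ∃ x y : ZMod n, x * a + y * b = 1) :
    ∃ t : ZMod n, IsUnit (a + t * b) := by
  obtain ⟨x, y, hxy⟩ := h
  set A := a.val with hA
  set B := b.val with hB
  have ha : (A : ZMod n) = a := by rw [hA, ZMod.natCast_val, ZMod.cast_id]
  have hb : (B : ZMod n) = b := by rw [hB, ZMod.natCast_val, ZMod.cast_id]
  have hd : Nat.gcd (Nat.gcd A B) n = 1 := by
    set d := Nat.gcd (Nat.gcd A B) n with hdd
    have hdA : d ∣ A := (Nat.gcd_dvd_left _ _).trans (Nat.gcd_dvd_left A B)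
    have hdB : d ∣ B := (Nat.gcd_dvd_left _ _).trans (Nat.gcd_dvd_right A B)
    have hdn : d ∣ n := Nat.gcd_dvd_right _ _
    have hu : IsUnit (d : ZMod n) := by
      have h1 : (d : ZMod n) ∣ 1 := by
        rw [← hxy]
        exact dvd_add (Dvd.dvd.mul_left (by rw [← ha]; exact_mod_cast Nat.cast_dvd_cast hdA) x)
          (Dvd.dvd.mul_left (by rw [← hb]; exact_mod_cast Nat.cast_dvd_cast hdB) y)
      exact isUnit_of_dvd_one h1
    have hco : Nat.Coprime d n := (ZMod.isUnit_iff_coprime d n).mp hu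
    exact (Nat.gcd_eq_left hdn).symm.trans hco
  -- the shift
  set T := ∏ p ∈ n.primeFactors.filter (fun p => ¬ p ∣ A), p with hT
  refine ⟨(T : ZMod n), ?_⟩
  have key : Nat.Coprime (A + T * B) n := by
    apply Nat.coprime_of_dvd
    intro p hp hp1 hp2
    have hpfac : p ∈ n.primeFactors := Nat.mem_primeFactors.mpr ⟨hp, hp2, NeZero.ne n⟩
    by_cases hpA : p ∣ A
    · -- then p ∤ B and p ∤ T
      have hpB : ¬ p ∣ B := by
        intro hpB
        have : p ∣ Nat.gcd (Nat.gcd A B) n := Nat.dvd_gcd (Nat.dvd_gcd hpA hpB) hp2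
        rw [hd] at this; exact hp.ne_one (Nat.eq_one_of_dvd_one this)
      have hpT : ¬ p ∣ T := by
        intro hpT
        rw [hT] at hpT
        obtain ⟨q, hq, hpq⟩ := (Nat.Prime.prime hp).dvd_finset_prod_iff _ |>.mp hpT
        have hq' := Finset.mem_filter.mp hq
        have : p = q := ((Nat.prime_dvd_prime_iff_eq hp (Nat.prime_of_mem_primeFactors hq'.1)).mp hpq)
        exact hq'.2 (this ▸ hpA)
      have : p ∣ T * B := (Nat.dvd_add_right hpA).mp hp1
      rcases (Nat.Prime.dvd_mul hp).mp this with h | h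
      · exact hpT h
      · exact hpB h
    · -- p ∣ T
      have hpT : p ∣ T := by
        rw [hT]
        exact Finset.dvd_prod_of_mem _ (Finset.mem_filter.mpr ⟨hpfac, hpA⟩)
      have : p ∣ A := (Nat.dvd_add_iff_left (hpT.mul_right B)).mpr hp1
      exact hpA this
  have : IsUnit ((A + T * B : ℕ) : ZMod n) := (ZMod.isUnit_iff_coprime _ n).mpr key
  convert this using 1
  push_cast
  rw [ha, hb]



lemma srvec (n : ℕ) [NeZero n] (m : ℕ) (a : Fin (m + 1) → ZMod n)
    (p : Fin (m + 1) → ZMod n) (hp : ∑ i, p i * a i = 1) :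
    ∃ t : Fin (m + 1) → ZMod n, t 0 = 1 ∧ IsUnit (∑ i, t i * a i) := by
  set s : ZMod n := ∑ i : Fin m, p i.succ * a i.succ with hs
  have hps : p 0 * a 0 + 1 * s = 1 := by
    rw [one_mul, hs, ← Fin.sum_univ_succ (fun i => p i * a i), hp]
  obtain ⟨t₀, ht₀⟩ := sr1 n (a 0) s ⟨p 0, 1, hps⟩
  refine ⟨Fin.cons 1 (fun i => t₀ * p i.succ), by simp, ?_⟩
  have : ∑ i, (Fin.cons 1 (fun i : Fin m => t₀ * p i.succ) : Fin (m+1) → ZMod n) i * a i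
      = a 0 + t₀ * s := by
    rw [Fin.sum_univ_succ]
    simp [hs, Finset.mul_sum, mul_assoc]
  rw [this]
  exact ht₀

lemma subcol (n : ℕ) [NeZero n] (m : ℕ) (a : Fin (m + 1) → ZMod n)
    (p : Fin (m + 1) → ZMod n) (hp : ∑ i, p i * a i = 1) :
    ∃ G : Matrix (Fin (m + 1)) (Fin (m + 1)) (ZMod n), IsUnit G.det ∧ ∀ i, G i 0 = a i := by
  obtain ⟨t, ht0, htu⟩ := srvec n m a p hp
  set u : ZMod n := ∑ i, t i * a i with hu
  -- G : row 0 = t, identity below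
  set G : Matrix (Fin (m + 1)) (Fin (m + 1)) (ZMod n) :=
    Matrix.of (fun i j => if i = 0 then t j else if i = j then 1 else 0) with hG
  have hGdet : G.det = 1 := by
    have : G.BlockTriangular id := by
      intro i j hij
      have hij' : (j : ℕ) < (i : ℕ) := hij
      simp only [hG, Matrix.of_apply]
      rw [if_neg, if_neg]
      · intro h; rw [h] at hij'; exact absurd hij' (lt_irrefl _)
      · intro h; rw [h] at hij'; simp at hij'
    rw [Matrix.det_of_upperTriangular this]
    apply Finset.prod_eq_one
    intro i _
    by_cases hi : i = 0 <;> simp [hG, hi, ht0]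
  set C : Matrix (Fin (m + 1)) (Fin (m + 1)) (ZMod n) :=
    Matrix.of (fun i j => if j = 0 then (if i = 0 then u else a i) else if i = j then 1 else 0)
    with hC
  have hCdet : C.det = u := by
    have : C.BlockTriangular OrderDual.toDual := by
      intro i j hij
      have hij' : i < j := hij
      have hij'' : (i : ℕ) < (j : ℕ) := hij'
      simp only [hC, Matrix.of_apply]
      rw [if_neg, if_neg]
      · intro h; rw [h] at hij''; exact absurd hij'' (lt_irrefl _)
      · intro h; rw [h] at hij''; simp at hij''
    rw [Matrix.det_of_lowerTriangular _ this]
    rw [Fintype.prod_eq_single 0 (by intro i hi; simp [hC, hi])]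
    simp [hC]
  have hGu : IsUnit G.det := by rw [hGdet]; exact isUnit_one
  refine ⟨G⁻¹ * C, ?_, ?_⟩
  · rw [Matrix.det_mul, Matrix.det_nonsing_inv, hCdet, hGdet]
    simpa using htu
  · -- column 0 of G⁻¹ * C equals a
    have hcol : ∀ i, C i 0 = G.mulVec a i := by
      intro i
      simp only [Matrix.mulVec, dotProduct, hG, hC, Matrix.of_apply, if_pos rfl]
      by_cases hi : i = 0
      · subst hi; simp [hu]
      · simp only [if_neg hi]
        rw [Finset.sum_eq_single i (by intro b _ hb; rw [if_neg (fun h => hb h.symm), zero_mul])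
          (by intro h; exact absurd (Finset.mem_univ i) h)]
        simp
    intro i
    have : (G⁻¹ * C) i 0 = (G⁻¹.mulVec (fun t => C t 0)) i := by
      simp [Matrix.mulVec, dotProduct, Matrix.mul_apply]
    rw [this]
    have : (fun t => C t 0) = G.mulVec a := funext hcol
    rw [this, Matrix.mulVec_mulVec, Matrix.nonsing_inv_mul G hGu, Matrix.one_mulVec]



lemma mainlem (n : ℕ) [NeZero n] (k : ℕ) :
    ∀ (l : ℕ) (A : Matrix (Fin l) (Fin k) (ZMod n)) (P : Matrix (Fin k) (Fin l) (ZMod n)),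
      P * A = 1 →
      ∃ B : Matrix (Fin l) (Fin l) (ZMod n), IsUnit B.det ∧
        ∀ (j : Fin k) (h : (j : ℕ) < l) (i : Fin l), B i ⟨(j : ℕ), h⟩ = A i j := by
  induction k with
  | zero =>
    intro l A P _
    exact ⟨1, by simp, fun j => absurd j.isLt (by omega)⟩
  | succ k ih =>
    intro l A P hPA
    match l with
    | 0 =>
      exact ⟨1, by simp [Matrix.det_fin_zero], fun j h => absurd h (by omega)⟩
    | m + 1 =>
      -- column 0 of A is unimodular
      have hp : ∑ i, P 0 i * A i 0 = 1 := by
        have := congrFun (congrFun hPA 0) 0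
        rw [Matrix.mul_apply] at this
        simpa using this
      obtain ⟨G, hGdet, hGcol⟩ := subcol n m (fun i => A i 0) (fun i => P 0 i) hp
      set A₁ : Matrix (Fin (m + 1)) (Fin (k + 1)) (ZMod n) := G⁻¹ * A with hA₁
      have hGA₁ : G * A₁ = A := by
        rw [hA₁, ← Matrix.mul_assoc, Matrix.mul_nonsing_inv G hGdet, Matrix.one_mul]
      have hA₁col : ∀ i, A₁ i 0 = if i = 0 then 1 else 0 := by
        intro i
        have : A₁ i 0 = (G⁻¹ * G) i 0 := by
          rw [hA₁, Matrix.mul_apply, Matrix.mul_apply]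
          exact Finset.sum_congr rfl (fun t _ => by rw [hGcol t])
        rw [this, Matrix.nonsing_inv_mul G hGdet, Matrix.one_apply]
      set P₁ : Matrix (Fin (k + 1)) (Fin (m + 1)) (ZMod n) := P * G with hP₁
      have hP₁A₁ : P₁ * A₁ = 1 := by
        rw [hP₁, hA₁, Matrix.mul_assoc, ← Matrix.mul_assoc G, Matrix.mul_nonsing_inv G hGdet,
          Matrix.one_mul, hPA]
      have hP₁0 : ∀ i : Fin k, P₁ i.succ 0 = 0 := by
        intro i
        have h1 : (P₁ * A₁) i.succ 0 = P₁ i.succ 0 := by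
          rw [Matrix.mul_apply]
          rw [Finset.sum_eq_single 0 (fun b _ hb => by rw [hA₁col b, if_neg hb, mul_zero])
            (fun h => absurd (Finset.mem_univ _) h)]
          rw [hA₁col 0, if_pos rfl, mul_one]
        rw [hP₁A₁] at h1
        rw [← h1, Matrix.one_apply, if_neg (Fin.succ_ne_zero i)]
      set A' : Matrix (Fin m) (Fin k) (ZMod n) := Matrix.of (fun i j => A₁ i.succ j.succ) with hA'
      set P' : Matrix (Fin k) (Fin m) (ZMod n) := Matrix.of (fun i j => P₁ i.succ j.succ) with hP'
      have hP'A' : P' * A' = 1 := by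
        ext i j
        rw [Matrix.mul_apply]
        have h1 : (P₁ * A₁) i.succ j.succ = (1 : Matrix (Fin (k+1)) (Fin (k+1)) (ZMod n)) i.succ j.succ := by
          rw [hP₁A₁]
        rw [Matrix.mul_apply, Fin.sum_univ_succ, hP₁0 i, zero_mul, zero_add] at h1
        rw [show ∑ t : Fin m, P' i t * A' t j = ∑ t : Fin m, P₁ i.succ t.succ * A₁ t.succ j.succ from rfl]
        rw [h1, Matrix.one_apply, Matrix.one_apply]
        simp [Fin.succ_inj]
      obtain ⟨B', hB'det, hB'cols⟩ := ih m A' P' hP'A'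
      set C : Matrix (Fin (m + 1)) (Fin (m + 1)) (ZMod n) :=
        Matrix.of (Fin.cons
          (Fin.cons 1 (fun j' : Fin m => if h : (j' : ℕ) + 1 < k + 1 then A₁ 0 ⟨(j' : ℕ) + 1, h⟩ else 0))
          (fun i' : Fin m => Fin.cons 0 (fun j' : Fin m => B' i' j'))) with hC
      have hCsub : (C.submatrix (Fin.succAbove 0) Fin.succ) = B' := by
        ext i j
        simp only [Matrix.submatrix_apply, hC, Matrix.of_apply, Fin.succAbove_zero,
          Fin.cons_succ]
      have hCdet : C.det = B'.det := by
        rw [Matrix.det_succ_column_zero]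
        rw [Finset.sum_eq_single 0 ?h1 (fun h => absurd (Finset.mem_univ _) h)]
        · rw [hCsub]
          simp [hC]
        · intro b _ hb
          obtain ⟨b', rfl⟩ := Fin.exists_succ_eq.mpr hb
          simp [hC]
      refine ⟨G * C, ?_, ?_⟩
      · rw [Matrix.det_mul, hCdet]
        exact hGdet.mul hB'det
      · intro j h i
        have hCcol : ∀ t : Fin (m + 1), C t ⟨(j : ℕ), h⟩ = A₁ t j := by
          intro t
          rcases Fin.eq_zero_or_eq_succ j with rfl | ⟨j', rfl⟩
          · have h0 : (⟨(((0 : Fin (k+1))) : ℕ), h⟩ : Fin (m + 1)) = 0 := rfl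
            rw [h0, hA₁col t]
            rcases Fin.eq_zero_or_eq_succ t with rfl | ⟨t', rfl⟩
            · simp [hC]
            · simp [hC, Fin.succ_ne_zero]
          · have hj' : ((j'.succ : Fin (k+1)) : ℕ) = (j' : ℕ) + 1 := rfl
            have hjm : (j' : ℕ) < m := by omega
            have hsucc : (⟨((j'.succ : Fin (k+1)) : ℕ), h⟩ : Fin (m + 1)) = (⟨(j' : ℕ), hjm⟩ : Fin m).succ := by
              apply Fin.ext; simp [hj']
            rw [hsucc]
            rcases Fin.eq_zero_or_eq_succ t with rfl | ⟨t', rfl⟩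
            · simp only [hC, Matrix.of_apply, Fin.cons_zero, Fin.cons_succ]
              rw [dif_pos (show ((⟨(j' : ℕ), hjm⟩ : Fin m) : ℕ) + 1 < k + 1 from by
                simp only [Fin.val_mk]; omega)]
              exact congrArg (A₁ 0) (by apply Fin.ext; rfl)
            · simp only [hC, Matrix.of_apply, Fin.cons_succ]
              have := hB'cols j' (by omega : ((j' : Fin k) : ℕ) < m) t'
              rw [this]
              rfl
        rw [Matrix.mul_apply]
        have : ∑ t, G i t * C t ⟨(j : ℕ), h⟩ = ∑ t, G i t * A₁ t j :=
          Finset.sum_congr rfl (fun t _ => by rw [hCcol t])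
        rw [this, ← Matrix.mul_apply, hGA₁]



theorem stmt11 (n : ℕ) (hn : 0 < n) (r l k : ℕ) (hr : 2 ≤ r) (hl : 1 ≤ l) (hlr : l ≤ r - 1)
    (v : Fin k → (Fin r → ZMod n))
    (hzero : ∀ i, ∀ j : Fin r, l ≤ (j : ℕ) → v i j = 0)
    (hext : ∃ b : Module.Basis (Fin r) (ZMod n) (Fin r → ZMod n), ∀ i, v i ∈ Set.range ⇑b) :
    ∃ b : Module.Basis (Fin l) (ZMod n) (Fin l → ZMod n),
      ∀ i, (fun j : Fin l => v i (Fin.castLE (le_trans hlr (Nat.sub_le r 1)) j))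
        ∈ Set.range ⇑b := by
  have hle : l ≤ r := le_trans hlr (Nat.sub_le r 1)
  rcases eq_or_lt_of_le (Nat.succ_le_of_lt hn) with h1 | hn2
  · -- n = 1 : trivial ring
    have : Subsingleton (ZMod n) := by rw [← h1]; exact ⟨fun a b => Subsingleton.elim a b⟩
    exact ⟨Pi.basisFun _ _, fun i => ⟨⟨0, hl⟩, funext fun q => Subsingleton.elim _ _⟩⟩
  · haveI : NeZero n := ⟨by omega⟩
    obtain ⟨b, hb⟩ := hext
    choose f hf using hb
    set s : Finset (Fin r) := Finset.univ.image f with hs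
    set k' : ℕ := s.card with hk'
    set e : {x // x ∈ s} ≃ Fin k' := s.equivFin with he
    set g : Fin k' → Fin r := fun j => (e.symm j : Fin r) with hg
    have hginj : Function.Injective g := fun a b hab => by
      have := Subtype.ext hab
      exact e.symm.injective this
    have hmem : ∀ j, g j ∈ s := fun j => (e.symm j).2
    have zg : ∀ j (t : Fin r), l ≤ (t : ℕ) → b (g j) t = 0 := by
      intro j t ht
      obtain ⟨i, _, hi⟩ := Finset.mem_image.mp (hmem j)
      rw [← hi, hf i]
      exact hzero i t ht
    set A : Matrix (Fin l) (Fin k') (ZMod n) :=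
      Matrix.of (fun i j => b (g j) (Fin.castLE hle i)) with hA
    set P : Matrix (Fin k') (Fin l) (ZMod n) :=
      Matrix.of (fun j i => b.coord (g j) (Pi.single (Fin.castLE hle i) 1)) with hP
    have hPA : P * A = 1 := by
      ext j j'
      rw [Matrix.mul_apply]
      have step1 : ∀ i : Fin l, P j i * A i j'
          = b.coord (g j) (A i j' • (Pi.single (Fin.castLE hle i) 1 : Fin r → ZMod n)) := by
        intro i
        rw [map_smul, smul_eq_mul, mul_comm]
        rfl
      rw [Finset.sum_congr rfl (fun i _ => step1 i), ← map_sum]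
      have key : (∑ i : Fin l, A i j' • (Pi.single (Fin.castLE hle i) 1 : Fin r → ZMod n)) = b (g j') := by
        funext t
        rw [Finset.sum_apply]
        by_cases ht : (t : ℕ) < l
        · rw [Finset.sum_eq_single (⟨(t : ℕ), ht⟩ : Fin l)]
          · have hcast : Fin.castLE hle (⟨(t : ℕ), ht⟩ : Fin l) = t := by
              apply Fin.ext; rfl
            rw [Pi.smul_apply, hcast, Pi.single_eq_same, smul_eq_mul, mul_one, hA,
              Matrix.of_apply, hcast]
          · intro i _ hi
            rw [Pi.smul_apply, Pi.single_eq_of_ne, smul_zero]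
            intro hct
            apply hi
            apply Fin.ext
            have : ((Fin.castLE hle i : Fin r) : ℕ) = (t : ℕ) := by rw [hct]
            simpa using this
          · intro hnot; exact absurd (Finset.mem_univ _) hnot
        · rw [zg j' t (by omega)]
          apply Finset.sum_eq_zero
          intro i _
          rw [Pi.smul_apply, Pi.single_eq_of_ne, smul_zero]
          intro hct
          have : ((Fin.castLE hle i : Fin r) : ℕ) = (t : ℕ) := by rw [hct]
          simp at this
          omega
      rw [key, Module.Basis.coord_apply, Module.Basis.repr_self, Finsupp.single_apply]
      rw [Matrix.one_apply]
      by_cases hjj : j = j'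
      · subst hjj; simp
      · rw [if_neg (fun hgg => hjj (hginj hgg).symm), if_neg hjj]
    -- k' ≤ l by cardinality
    have hk'l : k' ≤ l := by
      have hinj : Function.Injective (Matrix.mulVecLin A) := by
        have hcomp : Matrix.mulVecLin P ∘ₗ Matrix.mulVecLin A = LinearMap.id := by
          rw [← Matrix.mulVecLin_mul, hPA, Matrix.mulVecLin_one]
        intro x y hxy
        have := congrArg (Matrix.mulVecLin P) hxy
        rw [← LinearMap.comp_apply, ← LinearMap.comp_apply, hcomp] at this
        simpa using this
      have hcard := Fintype.card_le_of_injective _ hinj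
      simp only [Fintype.card_fun, ZMod.card, Fintype.card_fin] at hcard
      exact (Nat.pow_le_pow_iff_right hn2).mp hcard
    obtain ⟨B, hBdet, hBcols⟩ := mainlem n k' l A P hPA
    haveI := B.invertibleOfIsUnitDet hBdet
    set E := B.toLinearEquiv' ‹Invertible B› with hE
    refine ⟨(Pi.basisFun (ZMod n) (Fin l)).map E, ?_⟩
    intro i
    have hfi : f i ∈ s := Finset.mem_image_of_mem f (Finset.mem_univ i)
    set j₀ : Fin k' := e ⟨f i, hfi⟩ with hj₀
    have hgj₀ : g j₀ = f i := by
      show ((e.symm (e ⟨f i, hfi⟩) : {x // x ∈ s}) : Fin r) = f i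
      rw [Equiv.symm_apply_apply]
    refine ⟨⟨(j₀ : ℕ), lt_of_lt_of_le j₀.isLt hk'l⟩, ?_⟩
    rw [Module.Basis.map_apply, Pi.basisFun_apply]
    have hEact : E (Pi.single (⟨(j₀ : ℕ), lt_of_lt_of_le j₀.isLt hk'l⟩ : Fin l) 1)
        = B.mulVec (Pi.single (⟨(j₀ : ℕ), lt_of_lt_of_le j₀.isLt hk'l⟩ : Fin l) 1) := by
      rfl
    rw [hEact]
    funext q
    rw [Matrix.mulVec, dotProduct,
      Finset.sum_eq_single (⟨(j₀ : ℕ), lt_of_lt_of_le j₀.isLt hk'l⟩ : Fin l)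
      (fun bb _ hbb => by rw [Pi.single_eq_of_ne hbb, mul_zero])
      (fun hnot => absurd (Finset.mem_univ _) hnot)]
    rw [Pi.single_eq_same, mul_one, hBcols j₀ (lt_of_lt_of_le j₀.isLt hk'l) q, hA,
      Matrix.of_apply, hgj₀, hf i]
end
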